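/- Let K be a real Banach algebra and let ι : K → C(Ω) be a continuous injective algebra homomorphism into the sup-normed algebra of continuous real functions on Ω. Suppose T : K → L(K,K) is a map such that for every f ∈ K, T(f) is a bounded linear operator on K satisfying ι(T(f)(φ)) = L_{ι(f)}(ι(φ)) for all φ ∈ K. Then the map f ↦ T(f)^*, sending f to the Banach-space adjoint (transpose) of T(f) acting on the topological dual K^*, is an analytic (Fréchet-analytic) map from K into L(K^*,K^*). -/

import Mathlib

open MeasureTheory Filter

noncomputable section

namespace Paper

variable {M : Type*} [MetricSpace M]

/-- Prepend one symbol: `ax = (a, x₁, x₂, …)`. -/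
def cons (a : M) (x : ℕ → M) : ℕ → M
  | 0 => a
  | n + 1 => x n

/-- Prepend a finite word `a ∈ Mⁿ`. -/
def consW {n : ℕ} (a : Fin n → M) (x : ℕ → M) : ℕ → M :=
  fun k => if h : k < n then a ⟨k, h⟩ else x (k - n)

/-- The left shift `σ`. -/
def shift (x : ℕ → M) : ℕ → M := fun n => x (n + 1)

/-- Birkhoff sum `Sₙ f = f + f∘σ + … + f∘σ^{n-1}`. -/
def birk (f : (ℕ → M) → ℝ) (n : ℕ) (x : ℕ → M) : ℝ :=
  ∑ i ∈ Finset.range n, f (shift^[i] x)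

/-- The metric `d_Ω(x,y) = Σ_{n≥1} 2^{-n} d(xₙ,yₙ)`. -/
def dOmega (x y : ℕ → M) : ℝ :=
  ∑' n : ℕ, (1 / 2 : ℝ) ^ (n + 1) * dist (x n) (y n)

/-- `dₙ(x,y) = max_{0 ≤ k < n} d_Ω(σᵏx, σᵏy)`. -/
def dN (n : ℕ) (x y : ℕ → M) : ℝ :=
  ⨆ k : Fin n, dOmega (shift^[(k : ℕ)] x) (shift^[(k : ℕ)] y)

/-- The (strong) Walters condition. -/
def Walters (f : (ℕ → M) → ℝ) : Prop :=
  ∀ ε : ℝ, 0 < ε → ∃ η : ℝ, 0 < η ∧ ∀ n : ℕ, 1 ≤ n → ∀ x y : ℕ → M,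
    dN n x y ≤ η → |birk f n x - birk f n y| ≤ ε

/-- `C_f(x,y) = sup_{n ≥ 1} sup_{a ∈ Mⁿ} (Sₙf(ax) − Sₙf(ay))`, a value in `(−∞,+∞]`. -/
def Cf (f : (ℕ → M) → ℝ) (x y : ℕ → M) : EReal :=
  ⨆ n : ℕ, ⨆ a : Fin (n + 1) → M,
    ((birk f (n + 1) (consW a x) - birk f (n + 1) (consW a y) : ℝ) : EReal)

/-- The weak Walters condition. -/
def WeakWalters (f : (ℕ → M) → ℝ) : Prop :=
  ∀ ε : ℝ, 0 < ε → ∃ δ : ℝ, 0 < δ ∧ ∀ x y : ℕ → M,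
    dOmega x y ≤ δ → Cf f x y ≤ (ε : EReal)

variable [MeasurableSpace M]

/-- The Ruelle operator `L_f φ(x) = ∫_M e^{f(ax)} φ(ax) dμ(a)`. -/
def ruelle (μ : Measure M) (f : (ℕ → M) → ℝ) (φ : (ℕ → M) → ℝ) : (ℕ → M) → ℝ :=
  fun x => ∫ a, Real.exp (f (cons a x)) * φ (cons a x) ∂μ

/-- The Ruelle operator with weight `g`: `Lφ(x) = ∫_M g(ax) φ(ax) dμ(a)`. -/
def ruelleG (μ : Measure M) (g : (ℕ → M) → ℝ) (φ : (ℕ → M) → ℝ) : (ℕ → M) → ℝ :=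
  fun x => ∫ a, g (cons a x) * φ (cons a x) ∂μ

/-- Under the same hypotheses as Statement 0, the map
`f ↦ (T f)^*` into `L(K^*, K^*)`, where `(T f)^* ψ = ψ ∘ T f` is the Banach-space
adjoint (transpose) of `T f`, is Fréchet-analytic. -/
theorem statement1
    [CompactSpace M] [BorelSpace M]
    (μ : Measure M) [IsProbabilityMeasure μ]
    {K : Type*} [NormedRing K] [NormedAlgebra ℝ K] [CompleteSpace K]
    (ι : K →ₐ[ℝ] C(ℕ → M, ℝ))
    (hι : Continuous fun k : K => ι k)
    (hinj : Function.Injective fun k : K => ι k)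
    (T : K → K →L[ℝ] K)
    (hT : ∀ (f φ : K) (x : ℕ → M),
      ι (T f φ) x = ∫ a, Real.exp (ι f (cons a x)) * (ι φ) (cons a x) ∂μ) :
    ∀ f : K,
      AnalyticAt ℝ
        (fun g : K => ((ContinuousLinearMap.compL ℝ K K ℝ).flip (T g) :
          (K →L[ℝ] ℝ) →L[ℝ] (K →L[ℝ] ℝ))) f := by
  intro f
  -- `ι` maps the Banach-algebra exponential to the pointwise exponential
  have hexp : ∀ (g : K) (x : ℕ → M),
      ι (NormedSpace.exp g) x = Real.exp (ι g x) := by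
    intro g x
    have := NormedSpace.map_exp_of_mem_ball (𝕂 := ℝ) ((ContinuousMap.evalAlgHom ℝ ℝ x).comp ι)
      ((continuous_eval_const x).comp hι) g
      ((NormedSpace.expSeries_radius_eq_top ℝ K).symm ▸ edist_lt_top _ _)
    simpa [Real.exp_eq_exp_ℝ] using this
  -- key identity : `T g = (T 0) ∘ (mul by exp g)`
  have key : ∀ g : K,
      T g = (T 0).comp (ContinuousLinearMap.mul ℝ K (NormedSpace.exp g)) := by
    intro g
    ext φ
    apply hinj
    ext x
    simp only [ContinuousLinearMap.comp_apply, ContinuousLinearMap.mul_apply']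
    rw [hT, hT]
    congr 1
    funext a
    rw [map_zero ι]
    simp [hexp, Real.exp_zero, map_mul ι]
  -- the target map is a continuous linear map applied to `exp`
  set L : K →L[ℝ] ((K →L[ℝ] ℝ) →L[ℝ] (K →L[ℝ] ℝ)) :=
    ((ContinuousLinearMap.compL ℝ K K ℝ).flip).comp
      (((ContinuousLinearMap.compL ℝ K K K) (T 0)).comp
        (ContinuousLinearMap.mul ℝ K)) with hL
  have hfun : (fun g : K => ((ContinuousLinearMap.compL ℝ K K ℝ).flip (T g) :
      (K →L[ℝ] ℝ) →L[ℝ] (K →L[ℝ] ℝ))) = fun g => L (NormedSpace.exp g) := by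
    funext g
    simp only [hL, ContinuousLinearMap.comp_apply, ContinuousLinearMap.compL_apply]
    rw [key g]
  rw [hfun]
  have hexpan : AnalyticAt ℝ (NormedSpace.exp : K → K) f :=
    NormedSpace.analyticAt_exp_of_mem_ball (𝕂 := ℝ) f
      (by rw [NormedSpace.expSeries_radius_eq_top]; exact edist_lt_top _ _)
  have h1 : AnalyticAt ℝ (⇑L) (NormedSpace.exp f) :=
    ContinuousLinearMap.analyticAt (𝕜 := ℝ) (E := K)
      (F := (K →L[ℝ] ℝ) →L[ℝ] (K →L[ℝ] ℝ)) L (NormedSpace.exp f)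
  exact h1.comp hexpan


end Paper
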